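/- Let (X, ≤) be a finite poset such that no connected component of X is a single point (equivalently, every x ∈ X is comparable with some y ≠ x). Let L be the L-complex of the relation ≤, i.e., the family of nonempty finite subsets t of X that have a lower bound in X, and let L' be the L-complex of the strict relation <, i.e., the nonempty finite subsets t of X such that there exists z ∈ X with z < x for all x ∈ t. Then L simplicially collapses to L'. -/

import Mathlib

/-- An elementary simplicial collapse: there are simplices `σ ⊊ σ'` in `T` such that `σ'` is
the unique simplex of `T` properly containing `σ`, and `M = T \ {σ, σ'}`. -/
def ElemCollapse {X : Type} (T M : Set (Finset X)) : Prop :=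
  ∃ σ σ' : Finset X, σ ∈ T ∧ σ' ∈ T ∧ σ ⊂ σ' ∧ (∀ τ ∈ T, σ ⊂ τ → τ = σ') ∧
    M = T \ {σ, σ'}

section Aux

attribute [local instance] Classical.propDecidable Classical.decEq

variable {X : Type} [PartialOrder X]

/-- Simplices with a lower bound but no strict lower bound. -/
def Dpred (t : Finset X) : Prop :=
  t.Nonempty ∧ (∃ z, ∀ x ∈ t, z ≤ x) ∧ ¬ (∃ z, ∀ x ∈ t, z < x)

lemma exists_min {t : Finset X} (ht : Dpred t) :
    ∃ z, z ∈ t ∧ (∀ x ∈ t, z ≤ x) ∧ ∀ w, w ≤ z → w = z := by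
  obtain ⟨hne, ⟨z, hz⟩, hns⟩ := ht
  refine ⟨z, ?_, hz, ?_⟩
  · by_contra hzt
    exact hns ⟨z, fun x hx => lt_of_le_of_ne (hz x hx) (fun e => hzt (e ▸ hx))⟩
  · intro w hw
    by_contra hne'
    exact hns ⟨w, fun x hx => lt_of_lt_of_le (lt_of_le_of_ne hw hne') (hz x hx)⟩

noncomputable def Ymap [Nonempty X] (m : X) : X :=
  if h : ∃ y, m < y then h.choose else Classical.arbitrary X

lemma Ymap_lt [Nonempty X] {m : X} (hm : ∃ y, m < y) : m < Ymap m := by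
  rw [Ymap, dif_pos hm]; exact hm.choose_spec

noncomputable def minOf [Nonempty X] (t : Finset X) : X :=
  if h : ∃ z, z ∈ t ∧ (∀ x ∈ t, z ≤ x) ∧ ∀ w, w ≤ z → w = z then h.choose
  else Classical.arbitrary X

lemma minOf_spec [Nonempty X] {t : Finset X} (ht : Dpred t) :
    minOf t ∈ t ∧ (∀ x ∈ t, minOf t ≤ x) ∧ ∀ w, w ≤ minOf t → w = minOf t := by
  rw [minOf, dif_pos (exists_min ht)]
  exact (exists_min ht).choose_spec

lemma minOf_unique [Nonempty X] {t : Finset X} (ht : Dpred t) {z : X}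
    (hzt : z ∈ t) (hz : ∀ x ∈ t, z ≤ x) : z = minOf t := by
  obtain ⟨hm, _, hmin⟩ := minOf_spec ht
  exact hmin z (hz _ hm)

noncomputable def pairOf [Nonempty X] (t : Finset X) : Finset X :=
  if Ymap (minOf t) ∈ t then t.erase (Ymap (minOf t)) else insert (Ymap (minOf t)) t

variable (h : ∀ x : X, ∃ y : X, y ≠ x ∧ (x ≤ y ∨ y ≤ x))
include h

lemma exists_gt_of_minimal {m : X} (hmin : ∀ w, w ≤ m → w = m) : ∃ y, m < y := by
  obtain ⟨y, hy, hcomp⟩ := h m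
  rcases hcomp with h1 | h2
  · exact ⟨y, lt_of_le_of_ne h1 (Ne.symm hy)⟩
  · exact absurd (hmin y h2) hy

lemma pair_core [Nonempty X] {t : Finset X} (ht : Dpred t) :
    Dpred (pairOf t) ∧ minOf (pairOf t) = minOf t ∧ pairOf (pairOf t) = t := by
  obtain ⟨hm, hlb, hmin⟩ := minOf_spec ht
  set m := minOf t with hmdef
  have hy : m < Ymap m := Ymap_lt (exists_gt_of_minimal h hmin)
  by_cases hyt : Ymap m ∈ t
  · have hpt : pairOf t = t.erase (Ymap m) := by
      rw [pairOf, ← hmdef, if_pos hyt]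
    have hmne : m ∈ t.erase (Ymap m) := Finset.mem_erase.2 ⟨ne_of_lt hy, hm⟩
    have hDs : Dpred (t.erase (Ymap m)) := by
      refine ⟨⟨m, hmne⟩, ⟨m, fun x hx => hlb x (Finset.mem_of_mem_erase hx)⟩, ?_⟩
      rintro ⟨z, hz⟩
      have : z < m := hz m hmne
      exact absurd (hmin z this.le) (ne_of_lt this)
    have hms : minOf (t.erase (Ymap m)) = m :=
      (minOf_unique hDs hmne (fun x hx => hlb x (Finset.mem_of_mem_erase hx))).symm
    refine ⟨hpt ▸ hDs, hpt ▸ hms, ?_⟩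
    rw [hpt, pairOf, hms, if_neg (Finset.notMem_erase _ _), Finset.insert_erase hyt]
  · have hpt : pairOf t = insert (Ymap m) t := by
      rw [pairOf, ← hmdef, if_neg hyt]
    have hmin' : m ∈ insert (Ymap m) t := Finset.mem_insert_of_mem hm
    have hlb' : ∀ x ∈ insert (Ymap m) t, m ≤ x := by
      intro x hx
      rcases Finset.mem_insert.1 hx with rfl | hx'
      · exact hy.le
      · exact hlb x hx'
    have hDs : Dpred (insert (Ymap m) t) := by
      refine ⟨⟨m, hmin'⟩, ⟨m, hlb'⟩, ?_⟩
      rintro ⟨z, hz⟩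
      have : z < m := hz m hmin'
      exact absurd (hmin z this.le) (ne_of_lt this)
    have hms : minOf (insert (Ymap m) t) = m := (minOf_unique hDs hmin' hlb').symm
    refine ⟨hpt ▸ hDs, hpt ▸ hms, ?_⟩
    rw [hpt, pairOf, hms, if_pos (Finset.mem_insert_self _ _), Finset.erase_insert hyt]

omit h

lemma Dpred_superset [Nonempty X] {σ τ : Finset X} (hσ : Dpred σ) (hστ : σ ⊆ τ)
    (hτ : ∃ z, ∀ x ∈ τ, z ≤ x) : Dpred τ ∧ minOf τ = minOf σ := by
  obtain ⟨hm, hlb, hmin⟩ := minOf_spec hσ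
  set m := minOf σ with hmdef
  have hmτ : m ∈ τ := hστ hm
  obtain ⟨z, hz⟩ := hτ
  have hzm : z = m := hmin z (hz m hmτ)
  have hlbτ : ∀ x ∈ τ, m ≤ x := hzm ▸ hz
  have hDτ : Dpred τ := by
    refine ⟨⟨m, hmτ⟩, ⟨m, hlbτ⟩, ?_⟩
    rintro ⟨w, hw⟩
    have : w < m := hw m hmτ
    exact absurd (hmin w this.le) (ne_of_lt this)
  exact ⟨hDτ, (minOf_unique hDτ hmτ hlbτ).symm⟩

lemma Dpred_not_strict {t : Finset X} (ht : Dpred t) :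
    t ∉ {t : Finset X | t.Nonempty ∧ ∃ z : X, ∀ x ∈ t, z < x} := by
  rintro ⟨_, hz⟩
  exact ht.2.2 hz

include h

lemma collapse_step [Fintype X] [Nonempty X] :
    ∀ n (A : Set (Finset X)), A.ncard = n → (∀ t ∈ A, Dpred t) → (∀ t ∈ A, pairOf t ∈ A) →
    Relation.ReflTransGen (ElemCollapse (X := X))
      ({t : Finset X | t.Nonempty ∧ ∃ z : X, ∀ x ∈ t, z < x} ∪ A)
      {t : Finset X | t.Nonempty ∧ ∃ z : X, ∀ x ∈ t, z < x} := by
  intro n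
  induction n using Nat.strong_induction_on with
  | _ n ih =>
    intro A hcard hAD hApair
    have hfin : A.Finite := Set.toFinite A
    rcases A.eq_empty_or_nonempty with rfl | hne
    · rw [Set.union_empty]
    obtain ⟨w, hw, hmax⟩ := Set.Finite.exists_maximalFor Finset.card A hfin hne
    have hwD : Dpred w := hAD w hw
    obtain ⟨hmw, hlbw, hminw⟩ := minOf_spec hwD
    set m := minOf w with hmdef
    set y := Ymap m with hydef
    -- y must be in w, else pairOf w would be bigger
    have hyw : y ∈ w := by
      by_contra hyw
      have hpw : pairOf w = insert y w := by rw [pairOf, ← hmdef, ← hydef, if_neg hyw]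
      have hmem : pairOf w ∈ A := hApair w hw
      have hc : w.card ≤ (pairOf w).card := by
        rw [hpw, Finset.card_insert_of_notMem hyw]; omega
      have := hmax hmem hc
      rw [hpw, Finset.card_insert_of_notMem hyw] at this
      omega
    set σ : Finset X := w.erase y with hσdef
    have hpw : pairOf w = σ := by rw [pairOf, ← hmdef, ← hydef, if_pos hyw]
    have hσA : σ ∈ A := hpw ▸ hApair w hw
    have hσD : Dpred σ := hAD σ hσA
    have hminσ : minOf σ = m := by
      have := (pair_core h hwD).2.1
      rw [hpw] at this; exact this
    have hpσ : pairOf σ = w := by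
      have := (pair_core h hwD).2.2
      rw [hpw] at this; exact this
    have hss : σ ⊂ w := Finset.erase_ssubset hyw
    have hcards : σ.card + 1 = w.card := Finset.card_erase_add_one hyw
    -- uniqueness
    have huniq : ∀ τ ∈ ({t : Finset X | t.Nonempty ∧ ∃ z : X, ∀ x ∈ t, z < x} ∪ A),
        σ ⊂ τ → τ = w := by
      rintro τ (hτ | hτA) hστ
      · exfalso
        obtain ⟨_, z, hz⟩ := hτ
        have hmσ : m ∈ σ := hminσ ▸ (minOf_spec hσD).1
        have : z < m := hz m (hστ.subset hmσ)
        exact absurd (hminw z this.le) (ne_of_lt this)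
      · have hτD : Dpred τ := hAD τ hτA
        obtain ⟨hDτ, hminτ⟩ := Dpred_superset hσD hστ.subset hτD.2.1
        rw [hminσ] at hminτ
        have hcardlt : σ.card < τ.card := Finset.card_lt_card hστ
        have hle : w.card ≤ τ.card := by omega
        have hcardeq : τ.card = w.card := le_antisymm (hmax hτA hle) hle
        obtain ⟨a, haτ, haσ⟩ := Finset.exists_of_ssubset hστ
        have hins : insert a σ ⊆ τ := Finset.insert_subset haτ hστ.subset
        have hinscard : τ.card ≤ (insert a σ).card := by
          rw [Finset.card_insert_of_notMem haσ]; omega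
        have hτeq : insert a σ = τ := Finset.eq_of_subset_of_card_le hins hinscard
        by_cases hay : a = y
        · rw [← hτeq, hay, hσdef, Finset.insert_erase hyw]
        · exfalso
          have hyτ : y ∉ τ := by
            rw [← hτeq]
            simp only [Finset.mem_insert]
            rintro (rfl | hyσ)
            · exact hay rfl
            · exact Finset.notMem_erase _ _ hyσ
          have hpτ : pairOf τ = insert y τ := by
            rw [pairOf, hminτ, ← hydef, if_neg hyτ]
          have hmem : pairOf τ ∈ A := hApair τ hτA
          have hc : w.card ≤ (pairOf τ).card := by
            rw [hpτ, Finset.card_insert_of_notMem hyτ]; omega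
          have := hmax hmem hc
          rw [hpτ, Finset.card_insert_of_notMem hyτ] at this
          omega
    -- the new family
    set A' : Set (Finset X) := A \ {σ, w} with hA'def
    have hσnw : σ ≠ w := hss.ne
    have hstep : ElemCollapse ({t : Finset X | t.Nonempty ∧ ∃ z : X, ∀ x ∈ t, z < x} ∪ A)
        ({t : Finset X | t.Nonempty ∧ ∃ z : X, ∀ x ∈ t, z < x} ∪ A') := by
      refine ⟨σ, w, Set.mem_union_right _ hσA, Set.mem_union_right _ hw, hss, huniq, ?_⟩
      ext τ
      simp only [Set.mem_union, Set.mem_diff, Set.mem_insert_iff, Set.mem_singleton_iff,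
        hA'def]
      constructor
      · rintro (hτ | ⟨hτA, hne'⟩)
        · refine ⟨Or.inl hτ, ?_⟩
          rintro (rfl | rfl)
          · exact Dpred_not_strict hσD hτ
          · exact Dpred_not_strict hwD hτ
        · exact ⟨Or.inr hτA, hne'⟩
      · rintro ⟨(hτ | hτA), hne'⟩
        · exact Or.inl hτ
        · exact Or.inr ⟨hτA, hne'⟩
    have hA'sub : A' ⊂ A := by
      constructor
      · exact Set.diff_subset
      · intro hsub
        exact (hsub hσA).2 (Set.mem_insert _ _)
    have hlt : A'.ncard < n := hcard ▸ Set.ncard_lt_ncard hA'sub hfin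
    have hA'D : ∀ t ∈ A', Dpred t := fun t ht => hAD t ht.1
    have hA'pair : ∀ t ∈ A', pairOf t ∈ A' := by
      rintro t ⟨htA, hne'⟩
      simp only [Set.mem_insert_iff, Set.mem_singleton_iff] at hne'
      refine ⟨hApair t htA, ?_⟩
      simp only [Set.mem_insert_iff, Set.mem_singleton_iff]
      have hinv : pairOf (pairOf t) = t := (pair_core h (hAD t htA)).2.2
      rintro (hps | hpw')
      · apply hne' (Or.inr ?_)
        rw [← hinv, hps, hpσ]
      · apply hne' (Or.inl ?_)
        rw [← hinv, hpw', hpw]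
    exact Relation.ReflTransGen.head hstep (ih _ hlt A' rfl hA'D hA'pair)

end Aux

/-- Let `(X, ≤)` be a finite poset in which no connected component is a single
point (every `x` is comparable with some `y ≠ x`). Then the L-complex of `≤` collapses to the
L-complex of `<` (a finite sequence of elementary collapses). -/
theorem stmt_16 {X : Type} [Fintype X] [PartialOrder X]
    (h : ∀ x : X, ∃ y : X, y ≠ x ∧ (x ≤ y ∨ y ≤ x)) :
    Relation.ReflTransGen (ElemCollapse (X := X))
      {t : Finset X | t.Nonempty ∧ ∃ z : X, ∀ x ∈ t, z ≤ x}
      {t : Finset X | t.Nonempty ∧ ∃ z : X, ∀ x ∈ t, z < x} := by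
  rcases isEmpty_or_nonempty X with hX | hX
  · have : {t : Finset X | t.Nonempty ∧ ∃ z : X, ∀ x ∈ t, z ≤ x}
        = {t : Finset X | t.Nonempty ∧ ∃ z : X, ∀ x ∈ t, z < x} := by
      ext t
      constructor <;> rintro ⟨⟨x, _⟩, _⟩ <;> exact (IsEmpty.false x).elim
    rw [this]
  · set L' := {t : Finset X | t.Nonempty ∧ ∃ z : X, ∀ x ∈ t, z < x} with hL'
    set A := {t : Finset X | t.Nonempty ∧ ∃ z : X, ∀ x ∈ t, z ≤ x} \ L' with hA
    have hmemD : ∀ t ∈ A, Dpred t := by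
      rintro t ⟨⟨hne, hz⟩, hns⟩
      refine ⟨hne, hz, fun hs => hns ⟨hne, hs⟩⟩
    have hDequiv : ∀ t : Finset X, Dpred t → t ∈ A := by
      rintro t ⟨hne, hz, hns⟩
      exact ⟨⟨hne, hz⟩, fun hs => hns hs.2⟩
    have hunion : L' ∪ A = {t : Finset X | t.Nonempty ∧ ∃ z : X, ∀ x ∈ t, z ≤ x} := by
      rw [hA]
      apply Set.union_diff_cancel
      rintro t ⟨hne, z, hz⟩
      exact ⟨hne, z, fun x hx => (hz x hx).le⟩
    have := collapse_step h A.ncard A rfl hmemD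
      (fun t ht => hDequiv _ (pair_core h (hmemD t ht)).1)
    rwa [hunion] at this
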